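/- In a finite-horizon MDP, for every h: inf_π max_{s,a} min{1/(w^π_h(s,a) Δ̃_h(s,a)²), W_h(s)²/(w^π_h(s,a) ε²)} = inf_π max_s (1/w^π_h(s)) ∑_a min{1/Δ̃_h(s,a)², W_h(s)²/ε²}, where the infimum is over all stochastic policies, w^π_h(s,a) = π_h(a|s)·w^π_h(s), and w^π_h(s) depends only on the policy's actions at steps before h. -/

import Mathlib

open scoped ENNReal Classical

open Finset in
/-- A finite-horizon MDP with finite state and action spaces, horizon `H`
(steps indexed `0, …, H-1`), initial state distribution `P0`, transition kernels `P`,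
and mean rewards `r` in `[0,1]`. -/
structure MDP (S A : Type*) [Fintype S] [Fintype A] where
  H : ℕ
  P0 : S → ℝ
  P0_nonneg : ∀ s, 0 ≤ P0 s
  P0_sum : ∑ s, P0 s = 1
  P : ℕ → S → A → S → ℝ
  P_nonneg : ∀ h s a s', 0 ≤ P h s a s'
  P_sum : ∀ h s a, ∑ s', P h s a s' = 1
  r : ℕ → S → A → ℝ
  r_nonneg : ∀ h s a, 0 ≤ r h s a
  r_le_one : ∀ h s a, r h s a ≤ 1

/-- A (stochastic) policy: `π h s a` is the probability of playing `a` in state `s` at step `h`. -/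
def Policy (S A : Type*) : Type _ := ℕ → S → A → ℝ

/-- `π` is a genuine stochastic policy: nonnegative and summing to one over actions. -/
def IsPolicy {S A : Type*} [Fintype A] (π : Policy S A) : Prop :=
  (∀ h s a, 0 ≤ π h s a) ∧ ∀ h s, ∑ a, π h s a = 1

/-- The stochastic policy corresponding to a deterministic policy `d`. -/
noncomputable def detPolicy {S A : Type*} [DecidableEq A] (d : ℕ → S → A) : Policy S A :=
  fun h s a => if a = d h s then 1 else 0

variable {S A : Type*} [Fintype S] [Fintype A]

/-- Value function computed backwards: `Vaux M π k s` is the expected reward-to-go of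
policy `π` from state `s` when `k` steps remain (i.e. at step `H - k`). -/
noncomputable def Vaux (M : MDP S A) (π : Policy S A) : ℕ → S → ℝ
  | 0, _ => 0
  | (k+1), s =>
      ∑ a, π (M.H - (k+1)) s a *
        (M.r (M.H - (k+1)) s a + ∑ s', M.P (M.H - (k+1)) s a s' * Vaux M π k s')

/-- `Vfun M π h s = V^π_h(s)`, the value of policy `π` at state `s`, step `h`. -/
noncomputable def Vfun (M : MDP S A) (π : Policy S A) (h : ℕ) (s : S) : ℝ :=
  Vaux M π (M.H - h) s

/-- `Qfun M π h s a = Q^π_h(s,a)` via the Bellman equation. -/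
noncomputable def Qfun (M : MDP S A) (π : Policy S A) (h : ℕ) (s : S) (a : A) : ℝ :=
  M.r h s a + ∑ s', M.P h s a s' * Vfun M π (h+1) s'

/-- `visit M π h s = w^π_h(s) = Pr_π[s_h = s]`, the state visitation probability. -/
noncomputable def visit (M : MDP S A) (π : Policy S A) : ℕ → S → ℝ
  | 0, s => M.P0 s
  | (h+1), s => ∑ s', ∑ a, visit M π h s' * π h s' a * M.P h s' a s

/-- `visitSA M π h s a = w^π_h(s,a) = Pr_π[s_h = s, a_h = a]`. -/
noncomputable def visitSA (M : MDP S A) (π : Policy S A) (h : ℕ) (s : S) (a : A) : ℝ :=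
  visit M π h s * π h s a

/-- `Vstar M h s = V^*_h(s)`, the optimal value function. -/
noncomputable def Vstar (M : MDP S A) (h : ℕ) (s : S) : ℝ :=
  ⨆ π : {π : Policy S A // IsPolicy π}, Vfun M π.1 h s

/-- `Qstar M h s a = Q^*_h(s,a)`, the optimal Q-function. -/
noncomputable def Qstar (M : MDP S A) (h : ℕ) (s : S) (a : A) : ℝ :=
  M.r h s a + ∑ s', M.P h s a s' * Vstar M (h+1) s'

/-- `Wmax M h s = W_h(s) = sup_π Pr_π[s_h = s]`, the maximum reachability of `s` at step `h`. -/
noncomputable def Wmax (M : MDP S A) (h : ℕ) (s : S) : ℝ :=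
  ⨆ π : {π : Policy S A // IsPolicy π}, visit M π.1 h s

/-- `V0 M π = V^π_0`, the value of policy `π`. -/
noncomputable def V0 (M : MDP S A) (π : Policy S A) : ℝ :=
  ∑ s, M.P0 s * Vfun M π 0 s

/-- `Vstar0 M = V^*_0 = sup_π V^π_0`. -/
noncomputable def Vstar0 (M : MDP S A) : ℝ :=
  ⨆ π : {π : Policy S A // IsPolicy π}, V0 M π.1

lemma enn_mul_min (a b c : ℝ≥0∞) : a * min b c = min (a * b) (a * c) := by
  rcases le_total b c with h | h
  · rw [min_eq_left h, min_eq_left (mul_le_mul_right h a)]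
  · rw [min_eq_right h, min_eq_right (mul_le_mul_right h a)]

lemma sum_le_iSup_div {A : Type*} [Fintype A] (c lam : A → ℝ≥0∞)
    (hlam : ∑ a, lam a = 1) : ∑ a, c a ≤ ⨆ a, c a / lam a := by
  by_cases hz : ∃ a, lam a = 0 ∧ c a ≠ 0
  · obtain ⟨a, h0, hc⟩ := hz
    have htop : c a / lam a = ⊤ := by rw [h0, ENNReal.div_zero hc]
    refine le_trans le_top ?_
    rw [← htop]; exact le_iSup (fun a => c a / lam a) a
  · push_neg at hz
    have hlt : ∀ a, lam a ≠ ⊤ := by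
      intro a
      have h1 : lam a ≤ 1 :=
        hlam ▸ Finset.single_le_sum (fun i _ => zero_le) (Finset.mem_univ a)
      exact ne_top_of_le_ne_top ENNReal.one_ne_top h1
    have hle : ∀ a, c a ≤ c a / lam a * lam a := by
      intro a
      by_cases h0 : lam a = 0
      · simp [hz a h0]
      · rw [ENNReal.div_mul_cancel h0 (hlt a)]
    calc ∑ a, c a ≤ ∑ a, c a / lam a * lam a := Finset.sum_le_sum fun a _ => hle a
      _ ≤ ∑ a, (⨆ a', c a' / lam a') * lam a :=
          Finset.sum_le_sum fun a _ => mul_le_mul_left (le_iSup (fun a' => c a' / lam a') a) (lam a)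
      _ = (⨆ a', c a' / lam a') * ∑ a, lam a := by rw [Finset.mul_sum]
      _ = _ := by rw [hlam, mul_one]

lemma visit_nonneg (M : MDP S A) (π : Policy S A) (hπ : ∀ h s a, 0 ≤ π h s a)
    (h : ℕ) (s : S) : 0 ≤ visit M π h s := by
  induction h generalizing s with
  | zero => exact M.P0_nonneg s
  | succ n ih =>
    refine Finset.sum_nonneg fun s' _ => Finset.sum_nonneg fun a _ => ?_
    exact mul_nonneg (mul_nonneg (ih s') (hπ n s' a)) (M.P_nonneg n s' a s)

lemma visit_congr (M : MDP S A) (π π' : Policy S A) (h : ℕ)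
    (hpp : ∀ h' < h, π h' = π' h') : visit M π h = visit M π' h := by
  induction h with
  | zero => rfl
  | succ n ih =>
    funext s
    simp only [visit]
    rw [ih fun h' hh' => hpp h' (Nat.lt_succ_of_lt hh'), hpp n (Nat.lt_succ_self n)]

lemma key_rw (X G Wq E : ℝ≥0∞) (hX : X ≠ ⊤) (hG : G ≠ ⊤) (hEt : E ≠ ⊤) :
    min (1 / (X * G)) (Wq / (X * E)) = X⁻¹ * min (1 / G) (Wq / E) := by
  rw [enn_mul_min]
  congr 1
  · rw [one_div, one_div, ENNReal.mul_inv (Or.inr hG) (Or.inl hX)]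
  · rw [div_eq_mul_inv, div_eq_mul_inv, ENNReal.mul_inv (Or.inr hEt) (Or.inl hX)]
    ring

/-- The inner maximum over actions in the gap-visitation complexity reduces to a sum:
`inf_π max_{s,a} min{1/(w^π_h(s,a)Δ̃²), W(s)²/(w^π_h(s,a)ε²)}
  = inf_π max_s (1/w^π_h(s)) ∑_a min{1/Δ̃², W(s)²/ε²}`,
where `w^π_h(s,a) = π_h(a|s) w^π_h(s)`. Divisions are in `ℝ≥0∞`. -/
theorem gap_visitation_inner_sum [Nonempty A] (M : MDP S A) (h : ℕ)
    (g : S → A → ℝ) (hg : ∀ s a, 0 ≤ g s a)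
    (W : S → ℝ) (hW : ∀ s, 0 ≤ W s) (ε : ℝ) (hε : 0 < ε) :
    (⨅ π : {π : Policy S A // IsPolicy π}, ⨆ s, ⨆ a,
        min (1 / (ENNReal.ofReal (visitSA M π.1 h s a) * ENNReal.ofReal (g s a) ^ 2))
            (ENNReal.ofReal (W s) ^ 2 /
              (ENNReal.ofReal (visitSA M π.1 h s a) * ENNReal.ofReal ε ^ 2)))
      = ⨅ π : {π : Policy S A // IsPolicy π}, ⨆ s,
          (1 / ENNReal.ofReal (visit M π.1 h s)) *
            ∑ a, min (1 / ENNReal.ofReal (g s a) ^ 2)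
                     (ENNReal.ofReal (W s) ^ 2 / ENNReal.ofReal ε ^ 2) := by
  classical
  set C : S → A → ℝ≥0∞ := fun s a =>
    min (1 / ENNReal.ofReal (g s a) ^ 2)
        (ENNReal.ofReal (W s) ^ 2 / ENNReal.ofReal ε ^ 2) with hCdef
  have hE0 : (ENNReal.ofReal ε ^ 2 : ℝ≥0∞) ≠ 0 :=
    pow_ne_zero _ (by simp [ENNReal.ofReal_eq_zero]; linarith)
  have hCfin : ∀ s a, C s a ≠ ⊤ := fun s a =>
    ne_top_of_le_ne_top
      (ENNReal.div_lt_top (ENNReal.pow_ne_top ENNReal.ofReal_ne_top) hE0).ne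
      (min_le_right _ _)
  -- main rewrite of the LHS terms
  have main_rw : ∀ (π : {π : Policy S A // IsPolicy π}) (s : S) (a : A),
      min (1 / (ENNReal.ofReal (visitSA M π.1 h s a) * ENNReal.ofReal (g s a) ^ 2))
          (ENNReal.ofReal (W s) ^ 2 /
            (ENNReal.ofReal (visitSA M π.1 h s a) * ENNReal.ofReal ε ^ 2))
      = (ENNReal.ofReal (visit M π.1 h s))⁻¹ *
          ((ENNReal.ofReal (π.1 h s a))⁻¹ * C s a) := by
    intro π s a
    rw [key_rw _ _ _ _ ENNReal.ofReal_ne_top (ENNReal.pow_ne_top ENNReal.ofReal_ne_top)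
        (ENNReal.pow_ne_top ENNReal.ofReal_ne_top)]
    show (ENNReal.ofReal (visitSA M π.1 h s a))⁻¹ * C s a = _
    rw [visitSA, ENNReal.ofReal_mul (visit_nonneg M π.1 π.2.1 h s),
      ENNReal.mul_inv (Or.inr ENNReal.ofReal_ne_top) (Or.inl ENNReal.ofReal_ne_top),
      mul_assoc]
  refine le_antisymm ?_ ?_
  · -- LHS ≤ RHS : reallocate the step-h policy proportionally
    refine le_iInf fun π => ?_
    set T : S → ℝ := fun s => (∑ a, C s a).toReal with hTdef
    set lam : S → A → ℝ := fun s a =>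
      if 0 < T s then (C s a).toReal / T s else (Fintype.card A : ℝ)⁻¹ with hlamdef
    set π' : Policy S A := fun h' s a => if h' = h then lam s a else π.1 h' s a with hπ'def
    have hSfin : ∀ s, (∑ a, C s a) ≠ ⊤ := by
      intro s
      exact (ENNReal.sum_lt_top.mpr fun a _ => (hCfin s a).lt_top).ne
    have hcardA : (0 : ℝ) < (Fintype.card A : ℝ) := by
      exact_mod_cast Fintype.card_pos
    have hπ' : IsPolicy π' := by
      constructor
      · intro h' s a
        simp only [hπ'def]
        split
        · simp only [hlamdef]
          split
          · exact div_nonneg ENNReal.toReal_nonneg (le_of_lt ‹_›)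
          · positivity
        · exact π.2.1 h' s a
      · intro h' s
        simp only [hπ'def]
        split
        · simp only [hlamdef]
          by_cases hT : 0 < T s
          · simp only [if_pos hT]
            rw [← Finset.sum_div]
            have hts : ∑ a, (C s a).toReal = T s :=
              (ENNReal.toReal_sum fun a _ => hCfin s a).symm
            rw [hts, div_self (ne_of_gt hT)]
          · simp only [if_neg hT, Finset.sum_const, Finset.card_univ, nsmul_eq_mul]
            field_simp
        · exact π.2.2 h' s
    have hw : visit M π' h = visit M π.1 h := by
      refine visit_congr M π' π.1 h fun h' hh' => ?_
      funext s a
      simp [hπ'def, Nat.ne_of_lt hh']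
    -- key bound: proportional allocation achieves the sum
    have hbound : ∀ s a, (ENNReal.ofReal (lam s a))⁻¹ * C s a ≤ ∑ a', C s a' := by
      intro s a
      rw [mul_comm, ← div_eq_mul_inv]
      by_cases hc0 : C s a = 0
      · simp [hc0]
      · have hSpos : (0 : ℝ≥0∞) < ∑ a', C s a' :=
          lt_of_lt_of_le (pos_iff_ne_zero.mpr hc0)
            (Finset.single_le_sum (fun i _ => zero_le) (Finset.mem_univ a))
        have hT : 0 < T s := ENNReal.toReal_pos hSpos.ne' (hSfin s)
        have hlameq : ENNReal.ofReal (lam s a) = C s a / ∑ a', C s a' := by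
          simp only [hlamdef, if_pos hT]
          rw [ENNReal.ofReal_div_of_pos hT, ENNReal.ofReal_toReal (hCfin s a)]
          congr 1
          simp only [hTdef]
          rw [ENNReal.ofReal_toReal (hSfin s)]
        rw [hlameq]
        have hb0 : C s a / ∑ a', C s a' ≠ 0 := by
          simp [ENNReal.div_eq_zero_iff, hc0, hSfin s]
        have hbt : C s a / ∑ a', C s a' ≠ ⊤ := by
          simp [ENNReal.div_eq_top, hc0, hCfin s a, hSpos.ne']
        rw [ENNReal.div_le_iff_le_mul (Or.inl hb0) (Or.inl hbt), mul_comm,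
          ENNReal.div_mul_cancel hSpos.ne' (hSfin s)]
    refine le_trans (iInf_le _ ⟨π', hπ'⟩) ?_
    refine iSup_le fun s => le_trans ?_ (le_iSup _ s)
    refine iSup_le fun a => ?_
    rw [main_rw ⟨π', hπ'⟩ s a]
    show (ENNReal.ofReal (visit M π' h s))⁻¹ *
        ((ENNReal.ofReal (π' h s a))⁻¹ * C s a) ≤ _
    rw [hw, one_div]
    refine mul_le_mul_right ?_ _
    have hpe : π' h s a = lam s a := by simp [hπ'def]
    rw [hpe]
    exact hbound s a
  · -- RHS ≤ LHS
    refine le_iInf fun π => ?_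
    refine (iInf_le _ π).trans ?_
    refine iSup_mono fun s => ?_
    have hlamsum : ∑ a, ENNReal.ofReal (π.1 h s a) = 1 := by
      rw [← ENNReal.ofReal_sum_of_nonneg fun a _ => π.2.1 h s a, π.2.2 h s,
        ENNReal.ofReal_one]
    calc (1 / ENNReal.ofReal (visit M π.1 h s)) * ∑ a, C s a
        ≤ (1 / ENNReal.ofReal (visit M π.1 h s)) *
            ⨆ a, C s a / ENNReal.ofReal (π.1 h s a) :=
          mul_le_mul_right (sum_le_iSup_div _ _ hlamsum) _
      _ = ⨆ a, (1 / ENNReal.ofReal (visit M π.1 h s)) *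
            (C s a / ENNReal.ofReal (π.1 h s a)) := by rw [ENNReal.mul_iSup]
      _ = ⨆ a, min (1 / (ENNReal.ofReal (visitSA M π.1 h s a) * ENNReal.ofReal (g s a) ^ 2))
            (ENNReal.ofReal (W s) ^ 2 /
              (ENNReal.ofReal (visitSA M π.1 h s a) * ENNReal.ofReal ε ^ 2)) := by
          refine iSup_congr fun a => ?_
          rw [main_rw π s a, one_div, div_eq_mul_inv, mul_comm (C s a)]
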